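/- For every integer n ≥ 1 there exists a 3-stretch correlated sampling algorithm for Δ_{n,1} = {x ∈ [0,1]^n : Σ_i x_i ≤ 1}. -/

import Mathlib

open MeasureTheory
open scoped ENNReal

/-- `x ∈ Δ_{n,k}`: all coordinates in `[0,1]` and the coordinate sum is at most `k`. -/
def memDelta (n k : ℕ) (x : Fin n → ℝ) : Prop :=
  (∀ i, 0 ≤ x i ∧ x i ≤ 1) ∧ ∑ i, x i ≤ (k : ℝ)

/-- An `α`-stretch correlated sampling algorithm for `Δ_{n,k}` on the probability space
`(Ω, μ)`: (P1) cardinality, (P2) marginals, (P3) stretch. -/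
def CorrSampling (n k : ℕ) (α : ℝ) {Ω : Type}
    [MeasurableSpace Ω] (μ : Measure Ω)
    (A : Ω → (Fin n → ℝ) → Finset (Fin n)) : Prop :=
  (∀ ω x, memDelta n k x →
    (A ω x).card = ⌊∑ i, x i⌋₊ ∨ (A ω x).card = ⌈∑ i, x i⌉₊) ∧
  (∀ x, memDelta n k x → ∀ i : Fin n,
    MeasurableSet {ω | i ∈ A ω x} ∧ μ {ω | i ∈ A ω x} = ENNReal.ofReal (x i)) ∧
  (∀ x y, memDelta n k x → memDelta n k y →
    ∫⁻ ω, ((symmDiff (A ω x) (A ω y)).card : ℝ≥0∞) ∂μ ≤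
      ENNReal.ofReal (α * ∑ i, |x i - y i|))


open ProbabilityTheory Real Set
open scoped Classical

noncomputable def nu : Measure ℝ := expMeasure 1

instance : IsProbabilityMeasure nu := isProbabilityMeasure_expMeasure zero_lt_one

lemma nu_apply (s : Set ℝ) (hs : MeasurableSet s) : nu s = ∫⁻ x in s, exponentialPDF 1 x := by
  rw [nu, expMeasure, gammaMeasure, withDensity_apply _ hs]; rfl

lemma nu_Iic (t : ℝ) : nu (Iic t) = ENNReal.ofReal (if 0 ≤ t then 1 - exp (-(1*t)) else 0) := by
  rw [nu_apply _ measurableSet_Iic, lintegral_exponentialPDF_eq_antiDeriv zero_lt_one]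

lemma nu_Ioi (t : ℝ) (ht : 0 ≤ t) : nu (Ioi t) = ENNReal.ofReal (exp (-t)) := by
  have h1 : nu (Iic t) = ENNReal.ofReal (1 - exp (-t)) := by rw [nu_Iic, if_pos ht, one_mul]
  have := measure_compl (μ := nu) (measurableSet_Iic (a := t)) (measure_ne_top _ _)
  rw [compl_Iic] at this
  have he : exp (-t) ≤ 1 := by rw [Real.exp_le_one_iff]; linarith
  rw [this, h1, measure_univ, ← ENNReal.ofReal_one, ← ENNReal.ofReal_sub _ (by linarith)]
  ring_nf

lemma nu_Ioi_of_nonpos (t : ℝ) (ht : t ≤ 0) : nu (Ioi t) = 1 := by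
  have : nu (Iic t) = 0 := by
    rw [nu_Iic, ENNReal.ofReal_eq_zero]
    split_ifs with h'
    · have : t = 0 := le_antisymm ht h'
      simp [this]
    · exact le_refl 0
  have h2 := measure_compl (μ := nu) (measurableSet_Iic (a := t)) (measure_ne_top _ _)
  rw [compl_Iic] at h2; rw [h2, this, measure_univ]; simp

lemma nu_neg_null : nu (Iio 0) = 0 := by
  have h := nu_Iic 0
  simp only [le_refl, if_pos, mul_zero, neg_zero, exp_zero, sub_self, ENNReal.ofReal_zero] at h
  exact measure_mono_null Iio_subset_Iic_self h

lemma measurable_nu_Ioi : Measurable (fun u : ℝ => nu (Ioi u)) :=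
  Antitone.measurable (fun u v huv => measure_mono (Ioi_subset_Ioi huv))

lemma exponentialPDF_mul (s t : ℝ) (hs : 0 < s) :
    ENNReal.ofReal s⁻¹ * exponentialPDF s t
      = ENNReal.ofReal (if 0 ≤ t then exp (-(s*t)) else 0) := by
  rw [exponentialPDF_eq, ← ENNReal.ofReal_mul (by positivity)]
  congr 1
  split_ifs with h
  · field_simp
  · simp

lemma cone_measure {m : ℕ} (c : Fin m → ℝ) (hc : ∀ j, 0 ≤ c j) :
    (nu.prod (Measure.pi fun _ : Fin m => nu)) {p : ℝ × (Fin m → ℝ) | ∀ j, c j * p.1 < p.2 j}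
      = ENNReal.ofReal (1 + ∑ j, c j)⁻¹ := by
  have hs0 : (0:ℝ) ≤ ∑ j, c j := Finset.sum_nonneg fun j _ => hc j
  have hspos : (0:ℝ) < 1 + ∑ j, c j := by linarith
  have hS : MeasurableSet {p : ℝ × (Fin m → ℝ) | ∀ j, c j * p.1 < p.2 j} := by
    rw [Set.setOf_forall]
    exact MeasurableSet.iInter fun j =>
      measurableSet_lt (measurable_fst.const_mul _) ((measurable_pi_apply j).comp measurable_snd)
  rw [Measure.prod_apply hS]
  have hslice : ∀ t : ℝ,
      (Measure.pi fun _ : Fin m => nu) (Prod.mk t ⁻¹' {p : ℝ × (Fin m → ℝ) | ∀ j, c j * p.1 < p.2 j})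
        = ∏ j, nu (Ioi (c j * t)) := by
    intro t
    have : (Prod.mk t ⁻¹' {p : ℝ × (Fin m → ℝ) | ∀ j, c j * p.1 < p.2 j})
        = Set.pi Set.univ (fun j => Ioi (c j * t)) := by
      ext w; simp [Set.mem_pi]
    rw [this, Measure.pi_pi]
  simp_rw [hslice]
  have hnu : nu = volume.withDensity (exponentialPDF 1) := rfl
  have hg : Measurable (fun t : ℝ => ∏ j, nu (Ioi (c j * t))) :=
    Finset.measurable_prod _ fun j _ => measurable_nu_Ioi.comp (measurable_const_mul _)
  have hf : Measurable (exponentialPDF 1) :=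
    (measurable_gammaPDFReal 1 1).ennreal_ofReal
  rw [show (∫⁻ x, ∏ j, nu (Ioi (c j * x)) ∂nu)
      = ∫⁻ x, ((exponentialPDF 1) * fun t => ∏ j, nu (Ioi (c j * t))) x ∂volume from
    lintegral_withDensity_eq_lintegral_mul volume hf hg]
  have hpt : ∀ t : ℝ, (exponentialPDF 1 * fun t => ∏ j, nu (Ioi (c j * t))) t
      = ENNReal.ofReal (1 + ∑ j, c j)⁻¹ * exponentialPDF (1 + ∑ j, c j) t := by
    intro t
    simp only [Pi.mul_apply]
    rw [exponentialPDF_mul _ t hspos]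
    rcases lt_or_ge t 0 with h | h
    · rw [exponentialPDF_of_neg h, if_neg (by linarith)]
      simp
    · have hj : ∀ j, nu (Ioi (c j * t)) = ENNReal.ofReal (exp (-(c j * t))) := fun j =>
        nu_Ioi _ (mul_nonneg (hc j) h)
      simp_rw [hj]
      rw [if_pos h, exponentialPDF_of_nonneg h, ← ENNReal.ofReal_prod_of_nonneg
        (fun j _ => (exp_pos _).le), ← ENNReal.ofReal_mul (by positivity)]
      congr 1
      rw [← Real.exp_sum, one_mul, ← Real.exp_add]
      congr 1
      rw [add_mul, one_mul, Finset.sum_mul, neg_add]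
      simp [neg_mul]
  simp_rw [hpt]
  have hf2 : Measurable (exponentialPDF (1 + ∑ j, c j)) :=
    (measurable_gammaPDFReal 1 _).ennreal_ofReal
  rw [lintegral_const_mul _ hf2, lintegral_exponentialPDF_eq_one hspos, mul_one]

noncomputable def piNu (n : ℕ) : Measure (Fin (n+1) → ℝ) := Measure.pi fun _ => nu

instance (n : ℕ) : IsProbabilityMeasure (piNu n) := by
  unfold piNu; infer_instance

lemma pi_cone {N : ℕ} (i : Fin (N+1)) (c : Fin (N+1) → ℝ) (hc : ∀ j, 0 ≤ c j) (hci : c i = 0) :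
    piNu N {ω | ∀ j, j ≠ i → c j * ω i < ω j} = ENNReal.ofReal (1 + ∑ j, c j)⁻¹ := by
  have mp := measurePreserving_piFinSuccAbove (fun _ : Fin (N+1) => nu) i
  set e := MeasurableEquiv.piFinSuccAbove (fun _ : Fin (N+1) => ℝ) i with he
  have hT : MeasurableSet {p : ℝ × (Fin N → ℝ) | ∀ k, c (i.succAbove k) * p.1 < p.2 k} := by
    rw [Set.setOf_forall]
    exact MeasurableSet.iInter fun k =>
      measurableSet_lt (measurable_fst.const_mul _) ((measurable_pi_apply k).comp measurable_snd)
  have hset : {ω : Fin (N+1) → ℝ | ∀ j, j ≠ i → c j * ω i < ω j}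
      = e ⁻¹' {p : ℝ × (Fin N → ℝ) | ∀ k, c (i.succAbove k) * p.1 < p.2 k} := by
    ext ω
    simp only [Set.mem_preimage, Set.mem_setOf_eq, he,
      MeasurableEquiv.piFinSuccAbove_apply, Fin.insertNthEquiv]
    constructor
    · intro h k
      exact h (i.succAbove k) (Fin.succAbove_ne i k)
    · intro h j hj
      obtain ⟨k, rfl⟩ := Fin.exists_succAbove_eq hj
      exact h k
  rw [hset, piNu, mp.measure_preimage hT.nullMeasurableSet, cone_measure _ (fun k => hc _)]
  congr 2
  rw [Fin.sum_univ_succAbove c i, hci, zero_add]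

section RealCore
variable {ι : Type*}

lemma two_mul_max (a b : ℝ) : 2 * max a b = a + b + |a - b| := by
  rcases le_total a b with h | h
  · rw [max_eq_right h, abs_of_nonpos (by linarith)]; ring
  · rw [max_eq_left h, abs_of_nonneg (by linarith)]; ring

lemma real_core (s : Finset ι) (p q : ℝ) (hp : 0 < p) (hq : 0 < q)
    (u v : ι → ℝ) (hu : ∀ j ∈ s, 0 ≤ u j) (hv : ∀ j ∈ s, 0 ≤ v j)
    (hus : p + ∑ j ∈ s, u j = 1) (hvs : q + ∑ j ∈ s, v j = 1) :
    (1 + ∑ j ∈ s, max (u j / p) (v j / q))⁻¹ ≤ p ∧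
    (1 + ∑ j ∈ s, max (u j / p) (v j / q))⁻¹ ≤ q ∧
    p + q - 2 * (1 + ∑ j ∈ s, max (u j / p) (v j / q))⁻¹
      ≤ |p - q| + min p q * (|p - q| + ∑ j ∈ s, |u j - v j|) := by
  set K := ∑ j ∈ s, max (u j / p) (v j / q) with hK
  have hK0 : 0 ≤ K := Finset.sum_nonneg fun j hj =>
    le_trans (div_nonneg (hu j hj) hp.le) (le_max_left _ _)
  have hKp : (1 - p) / p ≤ K := by
    rw [hK]
    calc (1-p)/p = ∑ j ∈ s, u j / p := by rw [← Finset.sum_div]; congr 1; linarith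
    _ ≤ _ := Finset.sum_le_sum fun j hj => le_max_left _ _
  have hKq : (1 - q) / q ≤ K := by
    rw [hK]
    calc (1-q)/q = ∑ j ∈ s, v j / q := by rw [← Finset.sum_div]; congr 1; linarith
    _ ≤ _ := Finset.sum_le_sum fun j hj => le_max_right _ _
  have h1K : (0:ℝ) < 1 + K := by linarith
  have hap : (1 + K)⁻¹ ≤ p := by
    rw [inv_le_comm₀ h1K hp]
    calc p⁻¹ = 1 + (1-p)/p := by field_simp; ring
    _ ≤ 1 + K := by linarith
  have haq : (1 + K)⁻¹ ≤ q := by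
    rw [inv_le_comm₀ h1K hq]
    calc q⁻¹ = 1 + (1-q)/q := by field_simp; ring
    _ ≤ 1 + K := by linarith
  refine ⟨hap, haq, ?_⟩
  -- notation
  set c := min p q with hc
  set M := max p q with hM
  set R := ∑ j ∈ s, |u j * q - v j * p| with hR
  set Su := ∑ j ∈ s, |u j - v j| with hSu
  set D := p * q * (1 + K) with hD
  have hc0 : 0 < c := lt_min hp hq
  have hSu0 : 0 ≤ Su := Finset.sum_nonneg fun j hj => abs_nonneg _
  have hD0 : 0 < D := by positivity
  -- D = (p + q + R)/2
  have hDR : 2 * D = p + q + R := by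
    have hterm : ∀ j ∈ s, 2 * (p * q * max (u j / p) (v j / q))
        = u j * q + v j * p + |u j * q - v j * p| := by
      intro j hj
      have : p * q * max (u j / p) (v j / q) = max (u j * q) (v j * p) := by
        rw [mul_comm, max_mul_of_nonneg _ _ (by positivity : (0:ℝ) ≤ p * q)]
        congr 1
        · field_simp <;> ring
        · field_simp <;> ring
      rw [this, two_mul_max]
    have hKsum : 2 * ((p*q) * K) = ∑ j ∈ s, (u j * q + v j * p + |u j * q - v j * p|) := by
      rw [hK, Finset.mul_sum, Finset.mul_sum]
      exact Finset.sum_congr rfl hterm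
    have h2 : 2 * D = 2 * (p*q) + ∑ j ∈ s, (u j * q + v j * p + |u j * q - v j * p|) := by
      rw [← hKsum, hD]; ring
    rw [h2, Finset.sum_add_distrib, Finset.sum_add_distrib, ← Finset.sum_mul, ← Finset.sum_mul,
      ← hR]
    have e1 : ∑ j ∈ s, u j = 1 - p := by linarith
    have e2 : ∑ j ∈ s, v j = 1 - q := by linarith
    rw [e1, e2]; ring
  -- R bound
  have hRb : R ≤ c * Su + |p - q| := by
    rcases le_total q p with hqp | hpq
    · have hcq : c = q := min_eq_right hqp
      have habs : |p - q| = p - q := abs_of_nonneg (by linarith)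
      have hterm : ∀ j ∈ s, |u j * q - v j * p| ≤ q * |u j - v j| + v j * (p - q) := by
        intro j hj
        have hid : u j * q - v j * p = q * (u j - v j) + v j * (q - p) := by ring
        calc |u j * q - v j * p| = |q * (u j - v j) + v j * (q - p)| := by rw [hid]
        _ ≤ |q * (u j - v j)| + |v j * (q - p)| := abs_add_le _ _
        _ = q * |u j - v j| + v j * (p - q) := by
            rw [abs_mul, abs_mul, abs_of_nonneg hq.le, abs_of_nonneg (hv j hj),
              abs_of_nonpos (by linarith : q - p ≤ 0)]
            ring
      calc R ≤ ∑ j ∈ s, (q * |u j - v j| + v j * (p - q)) := Finset.sum_le_sum hterm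
      _ = q * Su + (1 - q) * (p - q) := by
          rw [Finset.sum_add_distrib, ← Finset.mul_sum, ← Finset.sum_mul]
          have e2 : ∑ j ∈ s, v j = 1 - q := by linarith
          rw [e2, hSu]
      _ ≤ c * Su + |p - q| := by
          rw [hcq, habs]
          nlinarith [hq.le, sub_nonneg.2 hqp]
    · have hcp : c = p := min_eq_left hpq
      have habs : |p - q| = q - p := by rw [abs_of_nonpos (by linarith : p - q ≤ 0), neg_sub]
      have hterm : ∀ j ∈ s, |u j * q - v j * p| ≤ p * |u j - v j| + u j * (q - p) := by
        intro j hj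
        have hid : u j * q - v j * p = p * (u j - v j) + u j * (q - p) := by ring
        calc |u j * q - v j * p| = |p * (u j - v j) + u j * (q - p)| := by rw [hid]
        _ ≤ |p * (u j - v j)| + |u j * (q - p)| := abs_add_le _ _
        _ = p * |u j - v j| + u j * (q - p) := by
            rw [abs_mul, abs_mul, abs_of_nonneg hp.le, abs_of_nonneg (hu j hj),
              abs_of_nonneg (by linarith : (0:ℝ) ≤ q - p)]
      calc R ≤ ∑ j ∈ s, (p * |u j - v j| + u j * (q - p)) := Finset.sum_le_sum hterm
      _ = p * Su + (1 - p) * (q - p) := by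
          rw [Finset.sum_add_distrib, ← Finset.mul_sum, ← Finset.sum_mul]
          have e1 : ∑ j ∈ s, u j = 1 - p := by linarith
          rw [e1, hSu]
      _ ≤ c * Su + |p - q| := by
          rw [hcp, habs]
          nlinarith [hp.le, sub_nonneg.2 hpq]
  -- structure facts
  have hcM1 : c + M = p + q := min_add_max p q
  have hcM2 : M - c = |p - q| := by
    rw [hc, hM]
    rcases le_total p q with h | h
    · rw [min_eq_left h, max_eq_right h, abs_of_nonpos (by linarith)]; ring
    · rw [min_eq_right h, max_eq_left h, abs_of_nonneg (by linarith)]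
  have hpq_mul : p * q = c * M := (min_mul_max p q).symm
  have hR0 : 0 ≤ R := Finset.sum_nonneg fun j hj => abs_nonneg _
  have hcD : c ≤ D := by
    linarith [min_le_left p q, min_le_right p q, hDR, hR0]
  -- main chain
  have ha : (1 + K)⁻¹ = p * q / D := by
    rw [hD]; field_simp
  have hmain : 2 * c - 2 * (p * q / D) ≤ c * Su := by
    have h1 : 2*c*D - 2*(p*q) = c*(R - |p - q|) := by
      linear_combination c*hDR - 2*hpq_mul - c*hcM1 - c*hcM2
    have h2 : c*(R - |p - q|) ≤ c*(c*Su) :=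
      mul_le_mul_of_nonneg_left (by linarith [hRb]) hc0.le
    have h3 : c*(c*Su) ≤ (c*Su)*D := by
      rw [mul_comm (c*Su) D]
      exact mul_le_mul_of_nonneg_right hcD (by positivity)
    have h4 : 2*c - 2*(p*q/D) = (2*c*D - 2*(p*q))/D := by field_simp <;> ring
    rw [h4, div_le_iff₀ hD0]
    linarith [h1, h2, h3]
  have hfinal : p + q - 2 * (1 + K)⁻¹ ≤ |p - q| + c * Su := by
    rw [ha]
    have : p + q = |p - q| + 2 * c := by linarith [hcM1, hcM2]
    linarith [hmain]
  calc p + q - 2*(1+K)⁻¹ ≤ |p - q| + c * Su := hfinal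
  _ ≤ |p - q| + c * (|p - q| + Su) := by nlinarith [abs_nonneg (p - q), hc0.le]

end RealCore

section Main
variable {n : ℕ}

/-- extended weight vector: index 0 is the ghost `1 - ∑ x`. -/
noncomputable def PP (x : Fin n → ℝ) : Fin (n+1) → ℝ := Fin.cons (1 - ∑ i, x i) x

@[simp] lemma PP_succ (x : Fin n → ℝ) (i : Fin n) : PP x i.succ = x i := Fin.cons_succ _ _ _
@[simp] lemma PP_zero (x : Fin n → ℝ) : PP x 0 = 1 - ∑ i, x i := Fin.cons_zero _ _

lemma PP_sum (x : Fin n → ℝ) : ∑ j, PP x j = 1 := by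
  rw [PP, Fin.sum_cons]; ring

lemma PP_nonneg {x : Fin n → ℝ} (hx : memDelta n 1 x) (j : Fin (n+1)) : 0 ≤ PP x j := by
  rcases Fin.eq_zero_or_eq_succ j with h | ⟨k, rfl⟩
  · subst h; rw [PP_zero]
    have := hx.2; simp only [Nat.cast_one] at this; linarith
  · rw [PP_succ]; exact (hx.1 k).1

/-- the event that coordinate `i` strictly wins the exponential race for `x`. -/
def Cnd (x : Fin n → ℝ) (i : Fin n) : Set (Fin (n+1) → ℝ) :=
  {ω | 0 < x i ∧ ∀ j, j ≠ i.succ → PP x j * ω i.succ < x i * ω j}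

lemma Cnd_measurable (x : Fin n → ℝ) (i : Fin n) : MeasurableSet (Cnd x i) := by
  by_cases hxi : 0 < x i
  · have : Cnd x i = ⋂ j, ⋂ (_ : j ≠ i.succ), {ω : Fin (n+1) → ℝ | PP x j * ω i.succ < x i * ω j} := by
      ext ω; simp [Cnd, hxi]
    rw [this]
    exact MeasurableSet.iInter fun j => MeasurableSet.iInter fun _ =>
      measurableSet_lt ((measurable_pi_apply _).const_mul _) ((measurable_pi_apply _).const_mul _)
  · have : Cnd x i = ∅ := by ext ω; simp [Cnd, hxi]
    rw [this]; exact MeasurableSet.empty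

lemma Cnd_empty {x : Fin n → ℝ} {i : Fin n} (hxi : ¬ 0 < x i) : Cnd x i = ∅ := by
  ext ω; simp [Cnd, hxi]

lemma Cnd_disjoint {x : Fin n → ℝ} {i i' : Fin n} (h : i ≠ i') {ω : Fin (n+1) → ℝ}
    (h1 : ω ∈ Cnd x i) (h2 : ω ∈ Cnd x i') : False := by
  have hne : i'.succ ≠ i.succ := fun hc => h (Fin.succ_injective n hc).symm
  have hne' : i.succ ≠ i'.succ := fun hc => h (Fin.succ_injective n hc)
  have a1 := h1.2 i'.succ hne
  have a2 := h2.2 i.succ hne'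
  rw [PP_succ] at a1 a2
  exact absurd (a1.trans a2) (lt_irrefl _)

lemma measure_Cnd {x : Fin n → ℝ} (hx : memDelta n 1 x) (i : Fin n) :
    piNu n (Cnd x i) = ENNReal.ofReal (x i) := by
  by_cases hxi : 0 < x i
  · set c : Fin (n+1) → ℝ := fun j => if j = i.succ then 0 else PP x j / x i with hc
    have hcnn : ∀ j, 0 ≤ c j := by
      intro j; rw [hc]; dsimp only
      split_ifs
      · exact le_rfl
      · exact div_nonneg (PP_nonneg hx j) hxi.le
    have hset : Cnd x i = {ω | ∀ j, j ≠ i.succ → c j * ω i.succ < ω j} := by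
      ext ω
      simp only [Cnd, Set.mem_setOf_eq, hxi, true_and, hc]
      refine forall_congr' fun j => ?_
      refine imp_congr_right fun hj => ?_
      rw [if_neg hj, div_mul_eq_mul_div, div_lt_iff₀ hxi, mul_comm (ω j)]
    have hsum : ∑ j, c j = (1 - x i) / x i := by
      have h1 : ∑ j ∈ Finset.univ.erase i.succ, c j + c i.succ = ∑ j, c j :=
        Finset.sum_erase_add _ _ (Finset.mem_univ i.succ)
      have h2 : c i.succ = 0 := by rw [hc]; simp
      have h3 : ∑ j ∈ Finset.univ.erase i.succ, c j
          = (∑ j ∈ Finset.univ.erase i.succ, PP x j) / x i := by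
        rw [Finset.sum_div]
        refine Finset.sum_congr rfl fun j hj => ?_
        rw [hc]; simp only
        rw [if_neg (Finset.mem_erase.1 hj).1]
      have h4 : ∑ j ∈ Finset.univ.erase i.succ, PP x j + PP x i.succ = ∑ j, PP x j :=
        Finset.sum_erase_add _ _ (Finset.mem_univ i.succ)
      rw [PP_sum, PP_succ] at h4
      rw [← h1, h2, add_zero, h3]
      rw [show ∑ j ∈ Finset.univ.erase i.succ, PP x j = 1 - x i by linarith]
    rw [hset, pi_cone i.succ c hcnn (by rw [hc]; simp), hsum]
    congr 1
    field_simp; ring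
  · rw [Cnd_empty hxi, measure_empty]
    have : x i = 0 := le_antisymm (not_lt.1 hxi) (hx.1 i).1
    rw [this]; simp


lemma coord_neg_null (i : Fin (n+1)) : piNu n {ω | ω i < 0} = 0 := by
  have hset : {ω : Fin (n+1) → ℝ | ω i < 0}
      = Set.pi Set.univ (fun j => if j = i then Iio (0:ℝ) else Set.univ) := by
    ext ω
    simp only [Set.mem_setOf_eq, Set.mem_pi, Set.mem_univ, forall_true_left]
    constructor
    · intro h j; split_ifs with hj
      · subst hj; exact h
      · trivial
    · intro h; have := h i; simpa using this
  rw [hset, piNu, Measure.pi_pi]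
  refine Finset.prod_eq_zero (Finset.mem_univ i) ?_
  simp [nu_neg_null]

lemma measure_eq_on_nonneg (i : Fin (n+1)) (S₁ S₂ : Set (Fin (n+1) → ℝ))
    (h : ∀ ω, 0 ≤ ω i → (ω ∈ S₁ ↔ ω ∈ S₂)) : piNu n S₁ = piNu n S₂ := by
  refine measure_congr ?_
  rw [MeasureTheory.ae_eq_set]
  constructor
  · refine measure_mono_null (fun ω hω => ?_) (coord_neg_null i)
    by_contra hneg
    simp only [Set.mem_setOf_eq, not_lt] at hneg
    exact hω.2 ((h ω hneg).1 hω.1)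
  · refine measure_mono_null (fun ω hω => ?_) (coord_neg_null i)
    by_contra hneg
    simp only [Set.mem_setOf_eq, not_lt] at hneg
    exact hω.2 ((h ω hneg).2 hω.1)

/-- the coefficient vector for the joint event -/
noncomputable def cJ (x y : Fin n → ℝ) (i : Fin n) : Fin (n+1) → ℝ :=
  fun j => if j = i.succ then 0 else max (PP x j / x i) (PP y j / y i)

lemma measure_Cnd_inter {x y : Fin n → ℝ} (hx : memDelta n 1 x) (hy : memDelta n 1 y)
    {i : Fin n} (hxi : 0 < x i) (hyi : 0 < y i) :
    piNu n (Cnd x i ∩ Cnd y i) = ENNReal.ofReal (1 + ∑ j, cJ x y i j)⁻¹ := by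
  have hcnn : ∀ j, 0 ≤ cJ x y i j := by
    intro j; unfold cJ
    split_ifs
    · exact le_rfl
    · exact le_trans (div_nonneg (PP_nonneg hx j) hxi.le) (le_max_left _ _)
  have heq : piNu n (Cnd x i ∩ Cnd y i)
      = piNu n {ω | ∀ j, j ≠ i.succ → cJ x y i j * ω i.succ < ω j} := by
    refine measure_eq_on_nonneg i.succ _ _ fun ω hω => ?_
    simp only [Cnd, Set.mem_inter_iff, Set.mem_setOf_eq, hxi, hyi, true_and, cJ]
    constructor
    · rintro ⟨h1, h2⟩ j hj
      rw [if_neg hj, max_mul_of_nonneg _ _ hω, max_lt_iff]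
      constructor
      · rw [div_mul_eq_mul_div, div_lt_iff₀ hxi, mul_comm (ω j)]; exact h1 j hj
      · rw [div_mul_eq_mul_div, div_lt_iff₀ hyi, mul_comm (ω j)]; exact h2 j hj
    · intro h
      constructor
      · intro j hj
        have := h j hj; rw [if_neg hj, max_mul_of_nonneg _ _ hω, max_lt_iff] at this
        have h1 := this.1
        rw [div_mul_eq_mul_div, div_lt_iff₀ hxi, mul_comm (ω j)] at h1; exact h1
      · intro j hj
        have := h j hj; rw [if_neg hj, max_mul_of_nonneg _ _ hω, max_lt_iff] at this
        have h2 := this.2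
        rw [div_mul_eq_mul_div, div_lt_iff₀ hyi, mul_comm (ω j)] at h2; exact h2
  rw [heq, pi_cone i.succ _ hcnn (by rw [cJ]; simp)]


/-- the filter of winning indices -/
noncomputable def Win (ω : Fin (n+1) → ℝ) (x : Fin n → ℝ) : Finset (Fin n) :=
  Finset.univ.filter (fun i => ω ∈ Cnd x i)

lemma mem_Win {ω : Fin (n+1) → ℝ} {x : Fin n → ℝ} {i : Fin n} :
    i ∈ Win ω x ↔ ω ∈ Cnd x i := by simp [Win]

lemma Win_card_le_one (ω : Fin (n+1) → ℝ) (x : Fin n → ℝ) : (Win ω x).card ≤ 1 :=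
  Finset.card_le_one.2 fun a ha b hb => by
    by_contra hab
    exact Cnd_disjoint hab (mem_Win.1 ha) (mem_Win.1 hb)

/-- default index -/
noncomputable def dflt (hn : 0 < n) (x : Fin n → ℝ) : Fin n :=
  if h : ∃ i, 0 < x i then h.choose else ⟨0, hn⟩

lemma dflt_pos {hn : 0 < n} {x : Fin n → ℝ} (hx : memDelta n 1 x) (hs : ∑ i, x i = 1) :
    0 < x (dflt hn x) := by
  have h : ∃ i, 0 < x i := by
    by_contra hc
    push_neg at hc
    have : ∀ i ∈ Finset.univ, x i = 0 := fun i _ => le_antisymm (hc i) (hx.1 i).1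
    rw [Finset.sum_congr rfl this, Finset.sum_const_zero] at hs
    norm_num at hs
  rw [dflt, dif_pos h]
  exact h.choose_spec

/-- The algorithm. -/
noncomputable def Alg (hn : 0 < n) (ω : Fin (n+1) → ℝ) (x : Fin n → ℝ) : Finset (Fin n) :=
  if (∑ i, x i = 1) ∧ Win ω x = ∅ then {dflt hn x} else Win ω x

/-- the no-winner set -/
def NoWin (x : Fin n → ℝ) : Set (Fin (n+1) → ℝ) := (⋃ i, Cnd x i)ᶜ

lemma NoWin_measurable (x : Fin n → ℝ) : MeasurableSet (NoWin x) :=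
  (MeasurableSet.iUnion fun i => Cnd_measurable x i).compl

lemma measure_iUnion_Cnd {x : Fin n → ℝ} (hx : memDelta n 1 x) :
    piNu n (⋃ i, Cnd x i) = ENNReal.ofReal (∑ i, x i) := by
  have hdis : Pairwise (Function.onFun Disjoint (Cnd x)) := fun i i' hii' =>
    Set.disjoint_left.mpr fun ω h1 h2 => Cnd_disjoint hii' h1 h2
  rw [measure_iUnion hdis (fun i => Cnd_measurable x i)]
  rw [show ∑' (i : Fin n), piNu n (Cnd x i) = ∑ i, piNu n (Cnd x i) from tsum_fintype _]
  rw [Finset.sum_congr rfl (fun i _ => measure_Cnd hx i)]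
  rw [← ENNReal.ofReal_sum_of_nonneg (fun i _ => (hx.1 i).1)]

lemma measure_NoWin {x : Fin n → ℝ} (hx : memDelta n 1 x) (hs : ∑ i, x i = 1) :
    piNu n (NoWin x) = 0 := by
  have := measure_compl (μ := piNu n) (MeasurableSet.iUnion fun i => Cnd_measurable x i)
    (measure_ne_top _ _)
  rw [NoWin, this, measure_iUnion_Cnd hx, hs, measure_univ, ENNReal.ofReal_one, tsub_self]

lemma mem_NoWin_iff {x : Fin n → ℝ} {ω : Fin (n+1) → ℝ} : ω ∈ NoWin x ↔ Win ω x = ∅ := by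
  simp [NoWin, Win, Finset.filter_eq_empty_iff]

/-- P1 -/
lemma Alg_card (hn : 0 < n) (ω : Fin (n+1) → ℝ) (x : Fin n → ℝ) (hx : memDelta n 1 x) :
    (Alg hn ω x).card = ⌊∑ i, x i⌋₊ ∨ (Alg hn ω x).card = ⌈∑ i, x i⌉₊ := by
  have hs0 : 0 ≤ ∑ i, x i := Finset.sum_nonneg fun i _ => (hx.1 i).1
  have hs1 : ∑ i, x i ≤ 1 := by have := hx.2; simpa using this
  rw [Alg]
  split_ifs with h
  · right
    rw [Finset.card_singleton, h.1]
    norm_num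
  · rcases Nat.le_one_iff_eq_zero_or_eq_one.1 (Win_card_le_one ω x) with h0 | h1
    · left
      rw [h0]
      have hlt : ∑ i, x i < 1 := by
        rcases lt_or_eq_of_le hs1 with h' | h'
        · exact h'
        · exact absurd ⟨h', Finset.card_eq_zero.1 h0⟩ h
      symm; rw [Nat.floor_eq_zero]; exact hlt
    · right
      rw [h1]
      obtain ⟨i, hi⟩ := Finset.card_eq_one.1 h1
      have hxi : 0 < x i := by
        have : i ∈ Win ω x := by rw [hi]; exact Finset.mem_singleton_self i
        exact (mem_Win.1 this).1
      have hspos : 0 < ∑ i, x i :=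
        lt_of_lt_of_le hxi (Finset.single_le_sum (fun i _ => (hx.1 i).1) (Finset.mem_univ i))
      refine le_antisymm (Nat.one_le_ceil_iff.2 hspos) ?_
      rw [Nat.ceil_le]; exact_mod_cast hs1

/-- the event sets -/
lemma Alg_event (hn : 0 < n) (x : Fin n → ℝ) (i : Fin n) :
    {ω : Fin (n+1) → ℝ | i ∈ Alg hn ω x} = if ∑ j, x j = 1 then
      ((if i = dflt hn x then NoWin x else ∅) ∪ Cnd x i) else Cnd x i := by
  by_cases hS : ∑ j, x j = 1
  · rw [if_pos hS]
    ext ω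
    simp only [Set.mem_setOf_eq, Set.mem_union]
    by_cases hW : Win ω x = ∅
    · have hA : Alg hn ω x = {dflt hn x} := by rw [Alg, if_pos ⟨hS, hW⟩]
      rw [hA, Finset.mem_singleton]
      constructor
      · intro h
        rw [if_pos h]
        exact Or.inl (mem_NoWin_iff.2 hW)
      · rintro (h | h)
        · by_cases hd : i = dflt hn x
          · exact hd
          · rw [if_neg hd] at h
            exact absurd h (Set.notMem_empty ω)
        · exfalso
          have := mem_Win.2 h
          rw [hW] at this
          exact Finset.notMem_empty i this
    · have hA : Alg hn ω x = Win ω x := by rw [Alg, if_neg (fun hc => hW hc.2)]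
      rw [hA, mem_Win]
      constructor
      · exact fun h => Or.inr h
      · rintro (h | h)
        · by_cases hd : i = dflt hn x
          · rw [if_pos hd] at h
            exact absurd (mem_NoWin_iff.1 h) hW
          · rw [if_neg hd] at h
            exact absurd h (Set.notMem_empty ω)
        · exact h
  · rw [if_neg hS]
    ext ω
    have hA : Alg hn ω x = Win ω x := by rw [Alg, if_neg (fun hc => hS hc.1)]
    simp only [Set.mem_setOf_eq, hA]
    exact mem_Win


lemma measure_union_left_null {α : Type*} [MeasurableSpace α] {μ : Measure α} {N C : Set α}
    (hN : μ N = 0) : μ (N ∪ C) = μ C := by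
  have h : (N ∪ C : Set α) =ᵐ[μ] (∅ ∪ C : Set α) :=
    (MeasureTheory.ae_eq_empty.2 hN).union (Filter.EventuallyEq.rfl)
  rw [measure_congr h, Set.empty_union]

/-- P2 -/
lemma Alg_P2 (hn : 0 < n) (x : Fin n → ℝ) (hx : memDelta n 1 x) (i : Fin n) :
    MeasurableSet {ω | i ∈ Alg hn ω x} ∧
      piNu n {ω | i ∈ Alg hn ω x} = ENNReal.ofReal (x i) := by
  rw [Alg_event hn x i]
  by_cases hS : ∑ j, x j = 1
  · rw [if_pos hS]
    have hN := measure_NoWin hx hS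
    by_cases hd : i = dflt hn x
    · rw [if_pos hd]
      exact ⟨(NoWin_measurable x).union (Cnd_measurable x i),
        by rw [measure_union_left_null hN, measure_Cnd hx i]⟩
    · rw [if_neg hd, Set.empty_union]
      exact ⟨Cnd_measurable x i, measure_Cnd hx i⟩
  · rw [if_neg hS]
    exact ⟨Cnd_measurable x i, measure_Cnd hx i⟩

lemma Alg_event_ae (hn : 0 < n) {x : Fin n → ℝ} (hx : memDelta n 1 x) (i : Fin n) :
    {ω : Fin (n+1) → ℝ | i ∈ Alg hn ω x} =ᵐ[piNu n] Cnd x i := by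
  rw [Alg_event hn x i]
  by_cases hS : ∑ j, x j = 1
  · rw [if_pos hS]
    have hN := measure_NoWin hx hS
    by_cases hd : i = dflt hn x
    · rw [if_pos hd]
      have h : (NoWin x ∪ Cnd x i : Set _) =ᵐ[piNu n] (∅ ∪ Cnd x i : Set _) :=
            (MeasureTheory.ae_eq_empty.2 hN).union Filter.EventuallyEq.rfl
      rwa [Set.empty_union] at h
    · rw [if_neg hd, Set.empty_union]; exact Filter.EventuallyEq.rfl
  · rw [if_neg hS]; exact Filter.EventuallyEq.rfl

/-- the total variation-like quantity -/
noncomputable def Lf (x y : Fin n → ℝ) : ℝ := ∑ j : Fin (n+1), |PP x j - PP y j|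

lemma Lf_le {x y : Fin n → ℝ} : Lf x y ≤ 2 * ∑ i, |x i - y i| := by
  have h0 : |PP x 0 - PP y 0| ≤ ∑ i, |x i - y i| := by
    rw [PP_zero, PP_zero]
    have : (1 - ∑ i, x i) - (1 - ∑ i, y i) = ∑ i, (y i - x i) := by
      rw [Finset.sum_sub_distrib]; ring
    rw [this]
    calc |∑ i, (y i - x i)| ≤ ∑ i, |y i - x i| := Finset.abs_sum_le_sum_abs _ _
    _ = ∑ i, |x i - y i| := Finset.sum_congr rfl fun i _ => abs_sub_comm _ _
  have hdec : Lf x y = |PP x 0 - PP y 0| + ∑ i, |x i - y i| := by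
    rw [Lf, Fin.sum_univ_succ]
    simp only [PP_succ]
  linarith

/-- per-coordinate symmetric-difference bound -/
lemma symmdiff_bound (hn : 0 < n) {x y : Fin n → ℝ} (hx : memDelta n 1 x)
    (hy : memDelta n 1 y) (i : Fin n) :
    piNu n (symmDiff (Cnd x i) (Cnd y i))
      ≤ ENNReal.ofReal (|x i - y i| + min (x i) (y i) * Lf x y) := by
  by_cases hxi : 0 < x i
  · by_cases hyi : 0 < y i
    · -- both positive
      set s : Finset (Fin (n+1)) := Finset.univ.erase i.succ with hs
      have hmemX : ∀ j ∈ s, 0 ≤ PP x j := fun j _ => PP_nonneg hx j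
      have hmemY : ∀ j ∈ s, 0 ≤ PP y j := fun j _ => PP_nonneg hy j
      have husum : x i + ∑ j ∈ s, PP x j = 1 := by
        have h4 : ∑ j ∈ s, PP x j + PP x i.succ = ∑ j, PP x j :=
          Finset.sum_erase_add _ _ (Finset.mem_univ i.succ)
        rw [PP_sum, PP_succ] at h4
        linarith
      have hvsum : y i + ∑ j ∈ s, PP y j = 1 := by
        have h4 : ∑ j ∈ s, PP y j + PP y i.succ = ∑ j, PP y j :=
          Finset.sum_erase_add _ _ (Finset.mem_univ i.succ)
        rw [PP_sum, PP_succ] at h4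
        linarith
      obtain ⟨hap, haq, hmain⟩ := real_core s (x i) (y i) hxi hyi (PP x) (PP y)
        hmemX hmemY husum hvsum
      set K := ∑ j ∈ s, max (PP x j / x i) (PP y j / y i) with hK
      have hK0 : 0 ≤ K := Finset.sum_nonneg fun j hj =>
        le_trans (div_nonneg (hmemX j hj) hxi.le) (le_max_left _ _)
      have ha0 : 0 ≤ (1 + K)⁻¹ := by positivity
      have hcJsum : ∑ j, cJ x y i j = K := by
        have h1 : ∑ j ∈ s, cJ x y i j + cJ x y i i.succ = ∑ j, cJ x y i j :=
          Finset.sum_erase_add _ _ (Finset.mem_univ i.succ)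
        have h2 : cJ x y i i.succ = 0 := by rw [cJ]; simp
        have h3 : ∑ j ∈ s, cJ x y i j = K := by
          rw [hK]
          refine Finset.sum_congr rfl fun j hj => ?_
          rw [cJ]
          rw [if_neg (Finset.mem_erase.1 hj).1]
        linarith
      have hint : piNu n (Cnd x i ∩ Cnd y i) = ENNReal.ofReal (1 + K)⁻¹ := by
        rw [measure_Cnd_inter hx hy hxi hyi, hcJsum]
      -- symm diff measure
      have hmx := Cnd_measurable x i
      have hmy := Cnd_measurable y i
      have hsd : piNu n (symmDiff (Cnd x i) (Cnd y i))
          = piNu n (Cnd x i \ Cnd y i) + piNu n (Cnd y i \ Cnd x i) := by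
        rw [Set.symmDiff_def]
        exact measure_union disjoint_sdiff_sdiff (hmy.diff hmx)
      have hd1 : piNu n (Cnd x i \ Cnd y i) = ENNReal.ofReal (x i - (1 + K)⁻¹) := by
        rw [← Set.diff_self_inter, measure_diff Set.inter_subset_left
          (hmx.inter hmy).nullMeasurableSet (measure_ne_top _ _), hint, measure_Cnd hx i,
          ENNReal.ofReal_sub _ ha0]
      have hd2 : piNu n (Cnd y i \ Cnd x i) = ENNReal.ofReal (y i - (1 + K)⁻¹) := by
        rw [← Set.diff_self_inter, measure_diff Set.inter_subset_left
          (hmy.inter hmx).nullMeasurableSet (measure_ne_top _ _)]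
        rw [Set.inter_comm, hint, measure_Cnd hy i, ENNReal.ofReal_sub _ ha0]
      rw [hsd, hd1, hd2, ← ENNReal.ofReal_add (by linarith) (by linarith)]
      refine ENNReal.ofReal_le_ofReal ?_
      have hLfeq : |x i - y i| + ∑ j ∈ s, |PP x j - PP y j| = Lf x y := by
        have h4 : ∑ j ∈ s, |PP x j - PP y j| + |PP x i.succ - PP y i.succ|
            = ∑ j, |PP x j - PP y j| := Finset.sum_erase_add _ _ (Finset.mem_univ i.succ)
        rw [PP_succ, PP_succ] at h4
        rw [Lf, ← h4]; ring
      calc x i - (1+K)⁻¹ + (y i - (1+K)⁻¹) = x i + y i - 2*(1+K)⁻¹ := by ring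
      _ ≤ |x i - y i| + min (x i) (y i) * (|x i - y i| + ∑ j ∈ s, |PP x j - PP y j|) := hmain
      _ = |x i - y i| + min (x i) (y i) * Lf x y := by rw [hLfeq]
    · -- y i = 0
      have hy0 : y i = 0 := le_antisymm (not_lt.1 hyi) (hy.1 i).1
      rw [Cnd_empty hyi, show symmDiff (Cnd x i) (∅ : Set (Fin (n+1) → ℝ)) = Cnd x i by
        simp [Set.symmDiff_def], measure_Cnd hx i]
      refine ENNReal.ofReal_le_ofReal ?_
      have hmin : min (x i) (y i) = 0 := by rw [hy0]; exact min_eq_right (hx.1 i).1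
      rw [hmin, hy0]
      rw [abs_of_nonneg (by linarith [(hx.1 i).1] : (0:ℝ) ≤ x i - 0)]
      linarith
  · -- x i = 0
    have hx0 : x i = 0 := le_antisymm (not_lt.1 hxi) (hx.1 i).1
    rw [Cnd_empty hxi, show symmDiff (∅ : Set (Fin (n+1) → ℝ)) (Cnd y i) = Cnd y i by
      simp [Set.symmDiff_def], measure_Cnd hy i]
    refine ENNReal.ofReal_le_ofReal ?_
    have hmin : min (x i) (y i) = 0 := by rw [hx0]; exact min_eq_left (hy.1 i).1
    rw [hmin, hx0]
    rw [abs_of_nonpos (by linarith [(hy.1 i).1] : (0:ℝ) - y i ≤ 0)]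
    simp

/-- P3 -/
lemma Alg_P3 (hn : 0 < n) (x y : Fin n → ℝ) (hx : memDelta n 1 x) (hy : memDelta n 1 y) :
    ∫⁻ ω, ((symmDiff (Alg hn ω x) (Alg hn ω y)).card : ℝ≥0∞) ∂(piNu n) ≤
      ENNReal.ofReal (3 * ∑ i, |x i - y i|) := by
  set Ex : Fin n → Set (Fin (n+1) → ℝ) := fun i => {ω | i ∈ Alg hn ω x} with hEx
  set Ey : Fin n → Set (Fin (n+1) → ℝ) := fun i => {ω | i ∈ Alg hn ω y} with hEy
  have hmx : ∀ i, MeasurableSet (Ex i) := fun i => (Alg_P2 hn x hx i).1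
  have hmy : ∀ i, MeasurableSet (Ey i) := fun i => (Alg_P2 hn y hy i).1
  have hmeas : ∀ i, MeasurableSet (symmDiff (Ex i) (Ey i)) := by
    intro i
    rw [Set.symmDiff_def]
    exact ((hmx i).diff (hmy i)).union ((hmy i).diff (hmx i))
  have hptw : ∀ ω, ((symmDiff (Alg hn ω x) (Alg hn ω y)).card : ℝ≥0∞)
      = ∑ i : Fin n, (symmDiff (Ex i) (Ey i)).indicator (1 : (Fin (n+1) → ℝ) → ℝ≥0∞) ω := by
    intro ω
    have h1 : ∀ i : Fin n, (symmDiff (Ex i) (Ey i)).indicator (1 : (Fin (n+1) → ℝ) → ℝ≥0∞) ω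
        = if i ∈ symmDiff (Alg hn ω x) (Alg hn ω y) then 1 else 0 := by
      intro i
      rw [Set.indicator_apply]
      simp only [Pi.one_apply]
      congr 1
      simp only [eq_iff_iff]
      rw [Set.mem_symmDiff, Finset.mem_symmDiff]
      simp only [hEx, hEy, Set.mem_setOf_eq, Set.mem_diff]
    rw [Finset.sum_congr rfl fun i _ => h1 i, Finset.sum_boole]
    rw [Finset.filter_mem_eq_inter, Finset.univ_inter]
  calc ∫⁻ ω, ((symmDiff (Alg hn ω x) (Alg hn ω y)).card : ℝ≥0∞) ∂(piNu n)
      = ∫⁻ ω, ∑ i : Fin n, (symmDiff (Ex i) (Ey i)).indicator (1 : (Fin (n+1) → ℝ) → ℝ≥0∞) ω ∂(piNu n) := by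
        exact lintegral_congr hptw
  _ = ∑ i : Fin n, ∫⁻ ω, (symmDiff (Ex i) (Ey i)).indicator (1 : (Fin (n+1) → ℝ) → ℝ≥0∞) ω ∂(piNu n) :=
        lintegral_finset_sum _ fun i _ => measurable_const.indicator (hmeas i)
  _ = ∑ i : Fin n, piNu n (symmDiff (Ex i) (Ey i)) := by
        refine Finset.sum_congr rfl fun i _ => ?_
        rw [lintegral_indicator_one (hmeas i)]
  _ = ∑ i : Fin n, piNu n (symmDiff (Cnd x i) (Cnd y i)) := by
        refine Finset.sum_congr rfl fun i _ => ?_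
        refine measure_congr ?_
        have h1 := Alg_event_ae hn hx i
        have h2 := Alg_event_ae hn hy i
        rw [Set.symmDiff_def, Set.symmDiff_def]
        exact (h1.diff h2).union (h2.diff h1)
  _ ≤ ∑ i : Fin n, ENNReal.ofReal (|x i - y i| + min (x i) (y i) * Lf x y) :=
        Finset.sum_le_sum fun i _ => symmdiff_bound hn hx hy i
  _ = ENNReal.ofReal (∑ i, (|x i - y i| + min (x i) (y i) * Lf x y)) := by
        rw [ENNReal.ofReal_sum_of_nonneg]
        intro i _
        have h1 : 0 ≤ min (x i) (y i) := le_min (hx.1 i).1 (hy.1 i).1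
        have h2 : 0 ≤ Lf x y := Finset.sum_nonneg fun j _ => abs_nonneg _
        positivity
  _ ≤ ENNReal.ofReal (3 * ∑ i, |x i - y i|) := by
        refine ENNReal.ofReal_le_ofReal ?_
        have hLf : Lf x y ≤ 2 * ∑ i, |x i - y i| := Lf_le
        have hLf0 : 0 ≤ Lf x y := Finset.sum_nonneg fun j _ => abs_nonneg _
        have heps : (0:ℝ) ≤ ∑ i, |x i - y i| := Finset.sum_nonneg fun i _ => abs_nonneg _
        have hmin1 : ∑ i, min (x i) (y i) ≤ 1 := by
          have h1 : ∑ i, min (x i) (y i) ≤ ∑ i, x i :=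
            Finset.sum_le_sum fun i _ => min_le_left _ _
          have h2 := hx.2
          simp only [Nat.cast_one] at h2
          linarith
        have hmin0 : 0 ≤ ∑ i, min (x i) (y i) :=
          Finset.sum_nonneg fun i _ => le_min (hx.1 i).1 (hy.1 i).1
        have hsplit : ∑ i, (|x i - y i| + min (x i) (y i) * Lf x y)
            = (∑ i, |x i - y i|) + (∑ i, min (x i) (y i)) * Lf x y := by
          rw [Finset.sum_add_distrib, Finset.sum_mul]
        rw [hsplit]
        nlinarith [mul_le_mul_of_nonneg_right hmin1 hLf0]

end Main

/-- For every `n ≥ 1` there exists a `3`-stretch correlated sampling algorithm for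
`Δ_{n,1}`. -/
theorem statement3 (n : ℕ) (hn : 1 ≤ n) :
    ∃ (Ω : Type) (mΩ : MeasurableSpace Ω) (μ : @Measure Ω mΩ)
      (A : Ω → (Fin n → ℝ) → Finset (Fin n)),
      @IsProbabilityMeasure Ω mΩ μ ∧
      @CorrSampling n 1 3 Ω mΩ μ A := by
  have hn' : 0 < n := hn
  refine ⟨Fin (n+1) → ℝ, inferInstance, piNu n, Alg hn', inferInstance,
    fun ω x hx => Alg_card hn' ω x hx,
    fun x hx i => Alg_P2 hn' x hx i,
    fun x y hx hy => Alg_P3 hn' x y hx hy⟩
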